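/- Quantile of the distorted variable: for the quantile loss ℓ_δ(x,c) = |δ − 1_{x ≤ c}| · |x − c| with δ ∈ (0,1), the function λ(c) := E[d(F_X(X)) ℓ_δ'(X,c)] with ℓ_δ'(x,c) = 1_{x ≤ c} − δ satisfies λ(c) = D(F_X(c)) − δ; hence any root c of λ satisfies D(F_X(c)) = δ, i.e. c is a δ-quantile of the distorted random variable X_D. -/

import Mathlib

open MeasureTheory Set

/-- quantile of the distorted variable: for the quantile loss with
right derivative `ℓ_δ'(x,c) = 1_{x ≤ c} − δ`, the function
`λ(c) = E[d(F_X(X)) ℓ_δ'(X,c)]` equals `D(F_X(c)) − δ`; hence any root `c` of `λ`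
satisfies `D(F_X(c)) = δ`, i.e. `c` is a `δ`-quantile of the distorted variable `X_D`. -/
theorem stmt15 (μ : Measure ℝ) [IsProbabilityMeasure μ]
    (F D d f : ℝ → ℝ) (δ : ℝ) (hδ : δ ∈ Ioo (0:ℝ) 1)
    (hf : μ = MeasureTheory.volume.withDensity (fun x => ENNReal.ofReal (f x)))
    (hF : ∀ x, F x = (μ (Iic x)).toReal)
    (hDdens : ∀ t ∈ Icc (0:ℝ) 1, D t = ∫ s in Icc (0:ℝ) t, d s)
    (hD1 : D 1 = 1) :
    (∀ c : ℝ, ∫ x, d (F x) * ((if x ≤ c then (1:ℝ) else 0) - δ) ∂μ = D (F c) - δ)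
    ∧ ∀ c : ℝ,
        (∫ x, d (F x) * ((if x ≤ c then (1:ℝ) else 0) - δ) ∂μ) = 0 →
        D (F c) = δ := by
  obtain ⟨hδ0, hδ1⟩ := hδ
  -- F coincides with the cdf of μ
  have hFc : F = ProbabilityTheory.cdf μ := by
    funext x; rw [hF, ProbabilityTheory.cdf_eq_real, measureReal_def]
  have hFmono : Monotone F := by rw [hFc]; exact ProbabilityTheory.monotone_cdf μ
  have hFmeas : Measurable F := hFmono.measurable
  have hF0 : ∀ x, 0 ≤ F x := by intro x; rw [hFc]; exact ProbabilityTheory.cdf_nonneg μ x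
  have hF1 : ∀ x, F x ≤ 1 := by intro x; rw [hFc]; exact ProbabilityTheory.cdf_le_one μ x
  have hIic : ∀ x, μ (Iic x) = ENNReal.ofReal (F x) := by
    intro x; rw [hFc]; exact (ProbabilityTheory.ofReal_cdf μ x).symm
  -- μ is absolutely continuous wrt Lebesgue, hence atomless and F is left continuous
  have hAC : μ ≪ MeasureTheory.volume := by
    rw [hf]; exact withDensity_absolutelyContinuous _ _
  have hsing : ∀ a : ℝ, μ {a} = 0 := fun a => hAC (by simp)
  have hleft : ∀ a : ℝ, Function.leftLim F a = F a := by
    intro a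
    have h1 := (ProbabilityTheory.cdf μ).measure_singleton a
    rw [ProbabilityTheory.measure_cdf, hsing a] at h1
    have h2 : ProbabilityTheory.cdf μ a - Function.leftLim (ProbabilityTheory.cdf μ) a ≤ 0 :=
      ENNReal.ofReal_eq_zero.mp h1.symm
    have h3 : Function.leftLim (ProbabilityTheory.cdf μ) a ≤ ProbabilityTheory.cdf μ a :=
      (ProbabilityTheory.monotone_cdf μ).leftLim_le le_rfl
    rw [hFc]
    linarith
  -- Key lemma: μ {x | F x ≤ t} = ofReal t for t ∈ [0, 1)
  have L1 : ∀ t : ℝ, 0 ≤ t → t < 1 → μ {x | F x ≤ t} = ENNReal.ofReal t := by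
    intro t ht0 ht1
    have hFtop : Filter.Tendsto F Filter.atTop (nhds 1) := by
      rw [hFc]; exact ProbabilityTheory.tendsto_cdf_atTop μ
    have hFbot : Filter.Tendsto F Filter.atBot (nhds 0) := by
      rw [hFc]; exact ProbabilityTheory.tendsto_cdf_atBot μ
    set A := {x : ℝ | F x ≤ t} with hA
    have hbdd : BddAbove A := by
      obtain ⟨M, hM⟩ := (hFtop.eventually_const_lt ht1).exists_forall_of_atTop
      refine ⟨M, fun x hx => ?_⟩
      by_contra hxM
      push_neg at hxM
      exact absurd hx (by simp only [hA, mem_setOf_eq, not_le]; exact hM x hxM.le)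
    by_cases hne : A.Nonempty
    · set s := sSup A with hs
      have hub : ∀ x ∈ A, x ≤ s := fun x hx => le_csSup hbdd hx
      have hlt : ∀ x, x < s → F x ≤ t := by
        intro x hx
        obtain ⟨a, ha, hxa⟩ := exists_lt_of_lt_csSup hne hx
        exact (hFmono hxa.le).trans ha
      have hFs_le : F s ≤ t := by
        rw [← hleft s, hFmono.leftLim_eq_sSup]
        apply csSup_le ((nonempty_Iio (a := s)).image F)
        rintro y ⟨x, hx, rfl⟩
        exact hlt x hx
      have hFs_ge : t ≤ F s := by
        by_contra h
        push_neg at h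
        have hrc : ContinuousWithinAt F (Ici s) s := by
          rw [hFc]; exact (ProbabilityTheory.cdf μ).right_continuous s
        have hev : ∀ᶠ x in nhdsWithin s (Ioi s), F x < t := by
          apply Filter.Eventually.filter_mono (nhdsWithin_mono s Ioi_subset_Ici_self)
          exact hrc.eventually_lt_const h
        obtain ⟨x, hxF, hxs⟩ := (hev.and (eventually_mem_nhdsWithin)).exists
        exact absurd (hub x hxF.le) (not_le.mpr hxs)
      have hAs : A = Iic s := by
        ext x
        exact ⟨fun hx => hub x hx, fun hx => (hFmono hx).trans hFs_le⟩
      rw [hAs, hIic s, le_antisymm hFs_le hFs_ge]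
    · rw [not_nonempty_iff_eq_empty] at hne
      have ht0' : t ≤ 0 := by
        by_contra h
        push_neg at h
        obtain ⟨x, hx⟩ := (hFbot.eventually_lt_const h).exists
        have hxA : x ∈ A := le_of_lt hx
        rw [hne] at hxA
        exact hxA
      rw [hne]
      simp [ENNReal.ofReal_eq_zero.mpr ht0']
  -- The pushforward of μ under F is the uniform distribution on [0,1]
  have hprob2 : IsProbabilityMeasure (MeasureTheory.volume.restrict (Icc (0:ℝ) 1)) := by
    constructor
    rw [Measure.restrict_apply_univ, Real.volume_Icc]
    norm_num
  have hprob1 : IsProbabilityMeasure (μ.map F) := Measure.isProbabilityMeasure_map hFmeas.aemeasurable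
  have hmap : μ.map F = MeasureTheory.volume.restrict (Icc (0:ℝ) 1) := by
    refine Measure.ext_of_Iic _ _ (fun t => ?_)
    rw [Measure.map_apply hFmeas measurableSet_Iic, Measure.restrict_apply measurableSet_Iic]
    rcases lt_or_ge t 0 with h | h
    · have h1 : F ⁻¹' Iic t = ∅ :=
        eq_empty_of_forall_notMem fun x hx => absurd (le_trans (hF0 x) hx) (not_le.mpr h)
      have h2 : Iic t ∩ Icc (0:ℝ) 1 = ∅ := by
        apply eq_empty_of_forall_notMem
        rintro x ⟨hx1, hx2, _⟩
        exact absurd (le_trans hx2 hx1) (not_le.mpr h)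
      rw [h1, h2]
      simp
    · rcases lt_or_ge t 1 with h1 | h1
      · have h2 : F ⁻¹' Iic t = {x | F x ≤ t} := rfl
        have h3 : Iic t ∩ Icc (0:ℝ) 1 = Icc 0 t := by
          ext x
          simp only [mem_inter_iff, mem_Iic, mem_Icc]
          constructor
          · rintro ⟨hx1, hx2, _⟩; exact ⟨hx2, hx1⟩
          · rintro ⟨hx1, hx2⟩; exact ⟨hx2, hx1, by linarith⟩
        rw [h2, h3, L1 t h h1, Real.volume_Icc, sub_zero]
      · have h2 : F ⁻¹' Iic t = univ := eq_univ_of_forall fun x => le_trans (hF1 x) h1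
        have h3 : Iic t ∩ Icc (0:ℝ) 1 = Icc 0 1 := by
          apply inter_eq_right.mpr
          rintro x ⟨_, hx2⟩
          exact le_trans hx2 h1
        rw [h2, h3, measure_univ, Real.volume_Icc]
        norm_num
  -- d is integrable on [0,1]
  have hdint : Integrable d (MeasureTheory.volume.restrict (Icc (0:ℝ) 1)) := by
    by_contra h
    have h1 := hDdens 1 ⟨zero_le_one, le_rfl⟩
    rw [hD1, integral_undef h] at h1
    exact one_ne_zero h1
  have hd_aesm : AEStronglyMeasurable d (μ.map F) := by
    rw [hmap]; exact hdint.1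
  have hgint : Integrable (fun x => d (F x)) μ :=
    (integrable_map_measure hd_aesm hFmeas.aemeasurable).1 (by rwa [hmap])
  have hIg : ∫ x, d (F x) ∂μ = 1 := by
    have h1 : ∫ y, d y ∂(μ.map F) = ∫ x, d (F x) ∂μ :=
      integral_map hFmeas.aemeasurable hd_aesm
    rw [← h1, hmap, ← hDdens 1 ⟨zero_le_one, le_rfl⟩, hD1]
  -- main computation
  have main : ∀ c : ℝ, ∫ x, d (F x) * ((if x ≤ c then (1:ℝ) else 0) - δ) ∂μ = D (F c) - δ := by
    intro c
    have hFc0 : 0 ≤ F c := hF0 c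
    have hFc1 : F c ≤ 1 := hF1 c
    -- the bad set has measure zero
    have hE : μ {x | ¬ x ≤ c ∧ F x ≤ F c} = 0 := by
      rcases lt_or_eq_of_le hFc1 with h1 | h1
      · have hs : μ {x | F x ≤ F c} = ENNReal.ofReal (F c) := L1 (F c) hFc0 h1
        have hsub : Iic c ⊆ {x | F x ≤ F c} := fun x hx => hFmono hx
        have hdiff : μ ({x | F x ≤ F c} \ Iic c) = 0 := by
          rw [measure_diff hsub measurableSet_Iic.nullMeasurableSet (measure_ne_top μ _),
            hs, hIic c, tsub_self]
        refine measure_mono_null (fun x hx => ?_) hdiff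
        exact ⟨hx.2, hx.1⟩
      · have hIoi : μ (Ioi c) = 0 := by
          have := measure_compl (μ := μ) (measurableSet_Iic (a := c)) (measure_ne_top μ (Iic c))
          rw [compl_Iic] at this
          rw [this, hIic c, h1, measure_univ]
          simp
        refine measure_mono_null (fun x hx => ?_) hIoi
        exact not_le.mp hx.1
    have hae : ∀ᵐ x ∂μ, (x ≤ c ↔ F x ≤ F c) := by
      rw [MeasureTheory.ae_iff]
      refine measure_mono_null (fun x hx => ?_) hE
      simp only [mem_setOf_eq] at hx ⊢
      by_cases hxc : x ≤ c
      · exact absurd (iff_of_true hxc (hFmono hxc)) hx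
      · refine ⟨hxc, ?_⟩
        by_contra hFx
        exact hx (iff_of_false hxc hFx)
    -- integrability of the indicator part
    have he_aesm : AEStronglyMeasurable ((Iic (F c)).indicator d) (μ.map F) :=
      hd_aesm.indicator measurableSet_Iic
    have he_int_map : Integrable ((Iic (F c)).indicator d) (μ.map F) := by
      rw [hmap]; exact hdint.indicator measurableSet_Iic
    have he_int : Integrable (fun x => (Iic (F c)).indicator d (F x)) μ :=
      (integrable_map_measure he_aesm hFmeas.aemeasurable).1 he_int_map
    -- pointwise a.e. rewrite
    have hstep1 : (fun x => d (F x) * ((if x ≤ c then (1:ℝ) else 0) - δ)) =ᵐ[μ]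
        fun x => (Iic (F c)).indicator d (F x) - δ * d (F x) := by
      filter_upwards [hae] with x hx
      by_cases hxc : x ≤ c
      · have hFx : F x ∈ Iic (F c) := hx.1 hxc
        simp only [if_pos hxc, indicator_of_mem hFx]
        ring
      · have hFx : F x ∉ Iic (F c) := fun h => hxc (hx.2 h)
        simp only [if_neg hxc, indicator_of_notMem hFx]
        ring
    -- value of the indicator integral
    have hJ : ∫ x, (Iic (F c)).indicator d (F x) ∂μ = D (F c) := by
      have h1 : ∫ y, (Iic (F c)).indicator d y ∂(μ.map F)
          = ∫ x, (Iic (F c)).indicator d (F x) ∂μ :=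
        integral_map hFmeas.aemeasurable he_aesm
      rw [← h1, hmap, integral_indicator measurableSet_Iic,
        Measure.restrict_restrict measurableSet_Iic]
      have h2 : Iic (F c) ∩ Icc (0:ℝ) 1 = Icc 0 (F c) := by
        ext x
        simp only [mem_inter_iff, mem_Iic, mem_Icc]
        constructor
        · rintro ⟨hx1, hx2, _⟩; exact ⟨hx2, hx1⟩
        · rintro ⟨hx1, hx2⟩; exact ⟨hx2, hx1, by linarith⟩
      rw [h2, ← hDdens (F c) ⟨hFc0, hFc1⟩]
    calc ∫ x, d (F x) * ((if x ≤ c then (1:ℝ) else 0) - δ) ∂μ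
        = ∫ x, ((Iic (F c)).indicator d (F x) - δ * d (F x)) ∂μ :=
          integral_congr_ae hstep1
      _ = (∫ x, (Iic (F c)).indicator d (F x) ∂μ) - ∫ x, δ * d (F x) ∂μ :=
          integral_sub he_int (hgint.const_mul δ)
      _ = D (F c) - δ * ∫ x, d (F x) ∂μ := by rw [hJ, integral_const_mul]
      _ = D (F c) - δ := by rw [hIg, mul_one]
  refine ⟨main, fun c hc => ?_⟩
  have := main c
  rw [hc] at this
  linarith
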